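/- Let Ω be a finite probability space, M ≥ 2, and X_1, …, X_M random variables with X_i taking values in a finite type A_i, such that the joint probability P(X_1 = x_1, …, X_M = x_M) is strictly positive for every tuple. For a parent assignment Θ : {2, …, M} → {1, …, M}, let q_Θ(x) = P(X_1 = x_1) · ∏_{i=2}^{M} P(X_i = x_i ∣ X_{Θ(i)} = x_{Θ(i)}) and D(Θ) = Σ_x P(X = x) log( P(X = x)/q_Θ(x) ). Then for any two parent assignments Θ and Θ′: D(Θ) ≤ D(Θ′) if and only if Σ_{i=2}^{M} I(X_i ; X_{Θ(i)}) ≥ Σ_{i=2}^{M} I(X_i ; X_{Θ′(i)}). In particular, minimizing the KL divergence over parent assignments is equivalent to maximizing the sum of pairwise mutual informations. -/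

import Mathlib

open scoped Classical

/-- Probability of an event `p` under the pmf `w` on a finite sample space. -/
noncomputable def pr {Ω : Type*} [Fintype Ω] (w : Ω → ℝ) (p : Ω → Prop) : ℝ :=
  ∑ ω : Ω, if p ω then w ω else 0

/-- Mutual information `I(X;Y)` (terms with zero joint probability vanish since `0 * log _ = 0`). -/
noncomputable def mutualInfo {Ω A B : Type*} [Fintype Ω] [Fintype A] [Fintype B]
    (w : Ω → ℝ) (X : Ω → A) (Y : Ω → B) : ℝ :=
  ∑ a : A, ∑ b : B,
    pr w (fun ω => X ω = a ∧ Y ω = b) *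
      Real.log (pr w (fun ω => X ω = a ∧ Y ω = b) /
        (pr w (fun ω => X ω = a) * pr w (fun ω => Y ω = b)))

/-- The tree-structured approximation
`q_Θ(x) = P(X_0 = x_0) ∏_{i ≠ 0} P(X_i = x_i ∣ X_{Θ i} = x_{Θ i})`
(index `0` of `Fin M` plays the role of `X_1`). -/
noncomputable def treeApprox {Ω : Type*} [Fintype Ω] (w : Ω → ℝ)
    {M : ℕ} (hM : 2 ≤ M) (A : Fin M → Type*) [∀ i, Fintype (A i)]
    (X : ∀ i, Ω → A i) (Θ : Fin M → Fin M) (x : ∀ i, A i) : ℝ :=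
  pr w (fun ω => X ⟨0, by omega⟩ ω = x ⟨0, by omega⟩) *
    ∏ i ∈ Finset.univ.filter (fun i : Fin M => i ≠ ⟨0, by omega⟩),
      pr w (fun ω => X i ω = x i ∧ X (Θ i) ω = x (Θ i)) /
        pr w (fun ω => X (Θ i) ω = x (Θ i))

/-- The KL divergence `D(Θ) = ∑_x P(X = x) log (P(X = x) / q_Θ(x))`. -/
noncomputable def treeKL {Ω : Type*} [Fintype Ω] (w : Ω → ℝ)
    {M : ℕ} (hM : 2 ≤ M) (A : Fin M → Type*) [∀ i, Fintype (A i)]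
    (X : ∀ i, Ω → A i) (Θ : Fin M → Fin M) : ℝ :=
  ∑ x : ∀ i, A i,
    pr w (fun ω => ∀ i, X i ω = x i) *
      Real.log (pr w (fun ω => ∀ i, X i ω = x i) / treeApprox w hM A X Θ x)

lemma pr_mono {Ω : Type*} [Fintype Ω] (w : Ω → ℝ) (hw0 : ∀ ω, 0 ≤ w ω)
    {p q : Ω → Prop} (h : ∀ ω, p ω → q ω) : pr w p ≤ pr w q := by
  apply Finset.sum_le_sum
  intro ω _
  by_cases hp : p ω
  · rw [if_pos hp, if_pos (h ω hp)]
  · rw [if_neg hp]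
    split
    · exact hw0 ω
    · exact le_refl 0


lemma sum_fiber {Ω B : Type*} [Fintype Ω] [Fintype B] (w : Ω → ℝ) (Y : Ω → B) (g : B → ℝ) :
    ∑ b : B, pr w (fun ω => Y ω = b) * g b = ∑ ω : Ω, w ω * g (Y ω) := by
  unfold pr
  simp only [Finset.sum_mul]
  rw [Finset.sum_comm]
  refine Finset.sum_congr rfl fun ω _ => ?_
  rw [Finset.sum_eq_single (Y ω)]
  · simp
  · intro b _ hb
    rw [if_neg (fun h => hb h.symm), zero_mul]
  · simp


lemma sum_tuple {Ω : Type*} [Fintype Ω] {M : ℕ} (A : Fin M → Type*) [∀ i, Fintype (A i)]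
    (w : Ω → ℝ) (X : ∀ i, Ω → A i) (f : (∀ i, A i) → ℝ) :
    ∑ x : ∀ i, A i, pr w (fun ω => ∀ i, X i ω = x i) * f x
      = ∑ ω : Ω, w ω * f (fun i => X i ω) := by
  rw [← sum_fiber w (fun ω => (fun i => X i ω)) f]
  refine Finset.sum_congr rfl fun x _ => ?_
  congr 1
  unfold pr
  refine Finset.sum_congr rfl fun ω _ => ?_
  simp [funext_iff]


lemma sum_pair {Ω B C : Type*} [Fintype Ω] [Fintype B] [Fintype C] (w : Ω → ℝ)
    (Y : Ω → B) (Z : Ω → C) (g : B → C → ℝ) :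
    ∑ b : B, ∑ c : C, pr w (fun ω => Y ω = b ∧ Z ω = c) * g b c
      = ∑ ω : Ω, w ω * g (Y ω) (Z ω) := by
  have h := sum_fiber w (fun ω => (Y ω, Z ω)) (fun p => g p.1 p.2)
  rw [Fintype.sum_prod_type] at h
  rw [← h]
  refine Finset.sum_congr rfl fun b _ => Finset.sum_congr rfl fun c _ => ?_
  congr 1
  unfold pr
  refine Finset.sum_congr rfl fun ω _ => ?_
  simp [Prod.ext_iff]


lemma mutualInfo_eq_sum {Ω : Type*} [Fintype Ω] (w : Ω → ℝ)
    {M : ℕ} (A : Fin M → Type*) [∀ i, Fintype (A i)]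
    (X : ∀ i, Ω → A i) (i j : Fin M) :
    (∑ x : ∀ k, A k, pr w (fun ω => ∀ k, X k ω = x k) *
      Real.log (pr w (fun ω => X i ω = x i ∧ X j ω = x j) /
        (pr w (fun ω => X i ω = x i) * pr w (fun ω => X j ω = x j))))
    = mutualInfo w (X i) (X j) := by
  have h1 := sum_tuple A w X (fun x => Real.log (pr w (fun ω => X i ω = x i ∧ X j ω = x j) /
        (pr w (fun ω => X i ω = x i) * pr w (fun ω => X j ω = x j))))
  have h2 := sum_pair w (X i) (X j) (fun a b => Real.log (pr w (fun ω => X i ω = a ∧ X j ω = b) /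
        (pr w (fun ω => X i ω = a) * pr w (fun ω => X j ω = b))))
  exact h1.trans h2.symm


lemma treeKL_eq {Ω : Type*} [Fintype Ω] (w : Ω → ℝ)
    (hw0 : ∀ ω, 0 ≤ w ω)
    {M : ℕ} (hM : 2 ≤ M) (A : Fin M → Type*) [∀ i, Fintype (A i)]
    (X : ∀ i, Ω → A i)
    (hpos : ∀ x : ∀ i, A i, 0 < pr w (fun ω => ∀ i, X i ω = x i))
    (Θ : Fin M → Fin M) :
    treeKL w hM A X Θ =
      (∑ x : ∀ i, A i, pr w (fun ω => ∀ i, X i ω = x i) *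
        (Real.log (pr w (fun ω => ∀ i, X i ω = x i))
          - Real.log (pr w (fun ω => X ⟨0, by omega⟩ ω = x ⟨0, by omega⟩))
          - ∑ i ∈ Finset.univ.filter (fun i : Fin M => i ≠ ⟨0, by omega⟩),
              Real.log (pr w (fun ω => X i ω = x i))))
      - ∑ i ∈ Finset.univ.filter (fun i : Fin M => i ≠ ⟨0, by omega⟩),
          mutualInfo w (X i) (X (Θ i)) := by
  have hPi : ∀ (i : Fin M) (x : ∀ k, A k), 0 < pr w (fun ω => X i ω = x i) := fun i x =>
    lt_of_lt_of_le (hpos x) (pr_mono w hw0 (fun ω h => h i))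
  have hPij : ∀ (i j : Fin M) (x : ∀ k, A k),
      0 < pr w (fun ω => X i ω = x i ∧ X j ω = x j) := fun i j x =>
    lt_of_lt_of_le (hpos x) (pr_mono w hw0 (fun ω h => ⟨h i, h j⟩))
  have key : ∀ x : ∀ i, A i,
      pr w (fun ω => ∀ i, X i ω = x i) *
        Real.log (pr w (fun ω => ∀ i, X i ω = x i) / treeApprox w hM A X Θ x)
      = pr w (fun ω => ∀ i, X i ω = x i) *
        (Real.log (pr w (fun ω => ∀ i, X i ω = x i))
          - Real.log (pr w (fun ω => X ⟨0, by omega⟩ ω = x ⟨0, by omega⟩))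
          - ∑ i ∈ Finset.univ.filter (fun i : Fin M => i ≠ ⟨0, by omega⟩),
              Real.log (pr w (fun ω => X i ω = x i)))
        - ∑ i ∈ Finset.univ.filter (fun i : Fin M => i ≠ ⟨0, by omega⟩),
            pr w (fun ω => ∀ i, X i ω = x i) *
              Real.log (pr w (fun ω => X i ω = x i ∧ X (Θ i) ω = x (Θ i)) /
                (pr w (fun ω => X i ω = x i) * pr w (fun ω => X (Θ i) ω = x (Θ i)))) := by
    intro x
    have hprod : ∀ i ∈ Finset.univ.filter (fun i : Fin M => i ≠ (⟨0, by omega⟩ : Fin M)),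
        pr w (fun ω => X i ω = x i ∧ X (Θ i) ω = x (Θ i)) /
          pr w (fun ω => X (Θ i) ω = x (Θ i)) ≠ 0 := fun i _ =>
      div_ne_zero (hPij i (Θ i) x).ne' (hPi (Θ i) x).ne'
    have hq : treeApprox w hM A X Θ x ≠ 0 :=
      mul_ne_zero (hPi _ x).ne' (Finset.prod_ne_zero_iff.mpr hprod)
    rw [Real.log_div (hpos x).ne' hq]
    unfold treeApprox
    rw [Real.log_mul (hPi _ x).ne' (Finset.prod_ne_zero_iff.mpr hprod),
      Real.log_prod hprod]
    have hterm : ∀ i ∈ Finset.univ.filter (fun i : Fin M => i ≠ (⟨0, by omega⟩ : Fin M)),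
        Real.log (pr w (fun ω => X i ω = x i ∧ X (Θ i) ω = x (Θ i)) /
          pr w (fun ω => X (Θ i) ω = x (Θ i)))
        = Real.log (pr w (fun ω => X i ω = x i ∧ X (Θ i) ω = x (Θ i)) /
            (pr w (fun ω => X i ω = x i) * pr w (fun ω => X (Θ i) ω = x (Θ i))))
          + Real.log (pr w (fun ω => X i ω = x i)) := by
      intro i _
      rw [Real.log_div (hPij i (Θ i) x).ne' (hPi (Θ i) x).ne',
        Real.log_div (hPij i (Θ i) x).ne'
          (mul_ne_zero (hPi i x).ne' (hPi (Θ i) x).ne'),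
        Real.log_mul (hPi i x).ne' (hPi (Θ i) x).ne']
      ring
    rw [Finset.sum_congr rfl hterm, Finset.sum_add_distrib, ← Finset.mul_sum]
    ring
  unfold treeKL
  rw [Finset.sum_congr rfl (fun x _ => key x), Finset.sum_sub_distrib, Finset.sum_comm]
  congr 1
  exact Finset.sum_congr rfl fun i _ => mutualInfo_eq_sum w A X i (Θ i)

/-- For a strictly positive joint distribution, comparing two parent assignments
`Θ` and `Θ'`: the KL divergence of `Θ` is at most that of `Θ'` iff the total pairwise mutual
information of `Θ` is at least that of `Θ'`. Hence minimizing the KL divergence over parent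
assignments is equivalent to maximizing the sum of pairwise mutual informations. -/
theorem kl_le_iff_mutualInfo_ge
    {Ω : Type*} [Fintype Ω] (w : Ω → ℝ)
    (hw0 : ∀ ω, 0 ≤ w ω) (hw1 : ∑ ω : Ω, w ω = 1)
    (M : ℕ) (hM : 2 ≤ M)
    (A : Fin M → Type*) [∀ i, Fintype (A i)]
    (X : ∀ i, Ω → A i)
    (hpos : ∀ x : ∀ i, A i, 0 < pr w (fun ω => ∀ i, X i ω = x i))
    (Θ Θ' : Fin M → Fin M) :
    treeKL w hM A X Θ ≤ treeKL w hM A X Θ' ↔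
      ∑ i ∈ Finset.univ.filter (fun i : Fin M => i ≠ ⟨0, by omega⟩),
          mutualInfo w (X i) (X (Θ' i))
        ≤ ∑ i ∈ Finset.univ.filter (fun i : Fin M => i ≠ ⟨0, by omega⟩),
            mutualInfo w (X i) (X (Θ i)) := by
  rw [treeKL_eq w hw0 hM A X hpos Θ, treeKL_eq w hw0 hM A X hpos Θ']
  constructor <;> intro h <;> linarith
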